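/- Fix t ∈ (0, 2π). The function f(r) = [ r/sin(tr/2) − 1/sin(t/2) ] / (t(1 − r²)) defined for r ∈ (−1, 1), r ≠ 0 (with the removable singularity at r = 0 filled by its limit) extends to a continuously differentiable function on the closed interval [−1, 1], and there exists C > 0 such that for all integers ℓ ≥ 1: | ∫_{−1}^1 f(r) · cos((ℓ+1)tr/2) dr | ≤ C/(ℓ+1). -/

import Mathlib

open MeasureTheory Real

lemma analyticAt_rsin (x : ℝ) : AnalyticAt ℝ Real.sin x := by
  have hI : AnalyticAt ℝ (fun x : ℝ => (x : ℂ) * Complex.I) x :=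
    (Complex.ofRealCLM.analyticAt x).mul analyticAt_const
  have h1 : AnalyticAt ℝ (fun x : ℝ => Complex.exp ((x:ℂ) * Complex.I)) x :=
    (analyticAt_cexp.restrictScalars).comp hI
  have h2 : AnalyticAt ℝ (fun x : ℝ => Complex.exp (-(x:ℂ) * Complex.I)) x := by
    have := (analyticAt_cexp.restrictScalars).comp hI.neg
    simpa [neg_mul, Function.comp_def, Pi.neg_apply] using this
  have h3 : AnalyticAt ℝ (fun x : ℝ => Complex.sin (x:ℂ)) x := by
    have : AnalyticAt ℝ (fun x : ℝ =>
        (Complex.exp (-(x:ℂ) * Complex.I) - Complex.exp ((x:ℂ) * Complex.I)) * Complex.I / 2) x :=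
      ((h2.sub h1).mul analyticAt_const).div analyticAt_const (by norm_num)
    simpa [Complex.sin] using this
  have h4 := (Complex.reCLM.analyticAt _).comp h3
  simpa [Complex.sin_ofReal_re, Function.comp_def] using h4

lemma analyticAt_dslope_self {f : ℝ → ℝ} {z₀ : ℝ} (hf : AnalyticAt ℝ f z₀) :
    AnalyticAt ℝ (dslope f z₀) z₀ := by
  rcases hf with ⟨p, hp⟩
  exact ⟨p.fslope, hp.has_fpower_series_dslope_fslope⟩

lemma analyticAt_dslope_of_ne {f : ℝ → ℝ} {z₀ x : ℝ} (hx : x ≠ z₀) (hf : AnalyticAt ℝ f x) :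
    AnalyticAt ℝ (dslope f z₀) x := by
  have h : AnalyticAt ℝ (fun y => (f y - f z₀) / (y - z₀)) x :=
    ((hf.sub analyticAt_const).div ((analyticAt_id).sub analyticAt_const) (sub_ne_zero.2 hx))
  refine h.congr ?_
  filter_upwards [eventually_ne_nhds hx] with y hy
  rw [dslope_of_ne _ hy, slope_def_field]

noncomputable def sf (t : ℝ) : ℝ → ℝ := dslope (fun r => Real.sin (t * r / 2)) 0
noncomputable def phif (t : ℝ) : ℝ → ℝ := fun r => (sf t r)⁻¹
noncomputable def uf (t : ℝ) : ℝ → ℝ := dslope (phif t) 1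
noncomputable def vf (t : ℝ) : ℝ → ℝ := dslope (uf t) (-1)
noncomputable def gf (t : ℝ) : ℝ → ℝ := fun r => -(vf t r) / t

section
variable {t : ℝ} (ht0 : 0 < t) (ht2 : t < 2 * π)

lemma Sf_analytic (x : ℝ) : AnalyticAt ℝ (fun r : ℝ => Real.sin (t * r / 2)) x := by
  exact (analyticAt_rsin _).comp
    ((analyticAt_const.mul analyticAt_id).div analyticAt_const two_ne_zero)

lemma sf_analytic (x : ℝ) : AnalyticAt ℝ (sf t) x := by
  rcases eq_or_ne x 0 with rfl | hx
  · exact analyticAt_dslope_self (Sf_analytic 0)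
  · exact analyticAt_dslope_of_ne hx (Sf_analytic x)

include ht0 ht2 in
lemma sin_pos_of_mem (x : ℝ) (hx : 0 < x) (hx1 : x ≤ 1) : 0 < Real.sin (t * x / 2) := by
  apply Real.sin_pos_of_pos_of_lt_pi
  · positivity
  · have : t * x ≤ t * 1 := by nlinarith
    nlinarith

include ht0 ht2 in
lemma sf_eq_of_ne (x : ℝ) (hx : x ≠ 0) : sf t x = Real.sin (t * x / 2) / x := by
  rw [sf, dslope_of_ne _ hx, slope_def_field]
  simp

include ht0 ht2 in
lemma sf_pos (x : ℝ) (hx : x ∈ Set.Icc (-1 : ℝ) 1) : 0 < sf t x := by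
  rcases lt_trichotomy x 0 with h | h | h
  · rw [sf_eq_of_ne ht0 ht2 x (ne_of_lt h)]
    have h1 : 0 < Real.sin (t * (-x) / 2) := sin_pos_of_mem ht0 ht2 (-x) (by linarith)
      (by linarith [hx.1])
    have h2 : Real.sin (t * x / 2) < 0 := by
      rw [show t * (-x) / 2 = -(t * x / 2) by ring, Real.sin_neg] at h1; linarith
    exact div_pos_of_neg_of_neg h2 h
  · subst h
    have hd : HasDerivAt (fun r : ℝ => Real.sin (t * r / 2))
        (Real.cos (t * (0:ℝ) / 2) * (t * 1 / 2)) 0 :=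
      (((hasDerivAt_id (0:ℝ)).const_mul t).div_const 2).sin
    rw [sf, dslope_same, hd.deriv]
    simp only [mul_zero, zero_div, Real.cos_zero, one_mul, mul_one]
    positivity
  · rw [sf_eq_of_ne ht0 ht2 x (ne_of_gt h)]
    exact div_pos (sin_pos_of_mem ht0 ht2 x h hx.2) h

include ht0 ht2 in
lemma phif_analytic (x : ℝ) (hx : x ∈ Set.Icc (-1 : ℝ) 1) : AnalyticAt ℝ (phif t) x :=
  (sf_analytic x).inv (ne_of_gt (sf_pos ht0 ht2 x hx))

include ht0 ht2 in
lemma uf_analytic (x : ℝ) (hx : x ∈ Set.Icc (-1 : ℝ) 1) : AnalyticAt ℝ (uf t) x := by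
  rcases eq_or_ne x 1 with rfl | h
  · exact analyticAt_dslope_self (phif_analytic ht0 ht2 _ hx)
  · exact analyticAt_dslope_of_ne h (phif_analytic ht0 ht2 _ hx)

include ht0 ht2 in
lemma vf_analytic (x : ℝ) (hx : x ∈ Set.Icc (-1 : ℝ) 1) : AnalyticAt ℝ (vf t) x := by
  rcases eq_or_ne x (-1) with rfl | h
  · exact analyticAt_dslope_self (uf_analytic ht0 ht2 _ hx)
  · exact analyticAt_dslope_of_ne h (uf_analytic ht0 ht2 _ hx)

include ht0 ht2 in
lemma gf_analytic (x : ℝ) (hx : x ∈ Set.Icc (-1 : ℝ) 1) : AnalyticAt ℝ (gf t) x :=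
  ((vf_analytic ht0 ht2 x hx).neg).div analyticAt_const (ne_of_gt ht0)

include ht0 ht2 in
lemma sin_half_pos : 0 < Real.sin (t / 2) := by
  have := sin_pos_of_mem ht0 ht2 1 one_pos le_rfl
  simpa using this

include ht0 ht2 in
lemma gf_eq (r : ℝ) (hr : r ∈ Set.Ioo (-1 : ℝ) 1) (hr0 : r ≠ 0) :
    gf t r = (r / Real.sin (t * r / 2) - 1 / Real.sin (t / 2)) / (t * (1 - r ^ 2)) := by
  obtain ⟨hrl, hrr⟩ := hr
  have hrn1 : r ≠ -1 := by intro h; rw [h] at hrl; exact lt_irrefl _ hrl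
  have hr1 : r ≠ 1 := ne_of_lt hrr
  have hB : (0:ℝ) < Real.sin (t / 2) := sin_half_pos ht0 ht2
  have hA : Real.sin (t * r / 2) ≠ 0 := by
    rcases lt_or_gt_of_ne hr0 with h | h
    · have h1 := sin_pos_of_mem ht0 ht2 (-r) (by linarith) (by linarith)
      rw [show t * (-r) / 2 = -(t * r / 2) by ring, Real.sin_neg] at h1
      linarith
    · exact ne_of_gt (sin_pos_of_mem ht0 ht2 r h (le_of_lt hrr))
  have hs1 : sf t 1 = Real.sin (t / 2) := by
    rw [sf_eq_of_ne ht0 ht2 1 one_ne_zero]; simp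
  have hsm1 : sf t (-1) = Real.sin (t / 2) := by
    rw [sf_eq_of_ne ht0 ht2 (-1) (by norm_num)]
    rw [show t * (-1) / 2 = -(t / 2) by ring, Real.sin_neg]
    field_simp
  have hsr : sf t r = Real.sin (t * r / 2) / r := sf_eq_of_ne ht0 ht2 r hr0
  have hphir : phif t r = r / Real.sin (t * r / 2) := by
    rw [phif, hsr]; rw [inv_div]
  have hphi1 : phif t 1 = 1 / Real.sin (t / 2) := by rw [phif, hs1, inv_eq_one_div]
  have hphim1 : phif t (-1) = 1 / Real.sin (t / 2) := by rw [phif, hsm1, inv_eq_one_div]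
  have hum1 : uf t (-1) = 0 := by
    rw [uf, dslope_of_ne _ (by norm_num), slope_def_field, hphim1, hphi1]
    simp
  have hur : uf t r = (phif t r - phif t 1) / (r - 1) := by
    rw [uf, dslope_of_ne _ hr1, slope_def_field]
  have hvr : vf t r = (uf t r) / (r + 1) := by
    rw [vf, dslope_of_ne _ hrn1, slope_def_field, hum1]
    ring_nf
  rw [gf, hvr, hur, hphir, hphi1]
  have h1 : r - 1 ≠ 0 := sub_ne_zero.2 hr1
  have h2 : r + 1 ≠ 0 := by intro h; apply hrn1; linarith
  have h3 : (1 : ℝ) - r ^ 2 ≠ 0 := by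
    intro h; have : (1 - r) * (1 + r) = 0 := by ring_nf; linarith [h]
    rcases mul_eq_zero.1 this with h' | h'
    · exact hr1 (by linarith)
    · exact hrn1 (by linarith)
  field_simp
  ring

end

/-- The smoothness and decay claim (partial integration) from the proof of Theorem 9.3. -/
theorem stmt_13 (t : ℝ) (ht : t ∈ Set.Ioo 0 (2 * π)) :
    (∃ g : ℝ → ℝ, ContDiffOn ℝ 1 g (Set.Icc (-1) 1) ∧
      ∀ r ∈ Set.Ioo (-1 : ℝ) 1, r ≠ 0 →
        g r = (r / Real.sin (t * r / 2) - 1 / Real.sin (t / 2)) / (t * (1 - r ^ 2))) ∧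
    ∃ C : ℝ, 0 < C ∧ ∀ ℓ : ℕ, 1 ≤ ℓ →
      |∫ r in Set.Ioo (-1 : ℝ) 1,
          (r / Real.sin (t * r / 2) - 1 / Real.sin (t / 2)) / (t * (1 - r ^ 2))
            * Real.cos (((ℓ : ℝ) + 1) * t * r / 2)|
        ≤ C / ((ℓ : ℝ) + 1) := by
  obtain ⟨ht0, ht2⟩ := ht
  have hcd : ContDiffOn ℝ 1 (gf t) (Set.Icc (-1) 1) :=
    fun x hx => ((gf_analytic ht0 ht2 x hx).contDiffAt).contDiffWithinAt
  refine ⟨⟨gf t, hcd, fun r hr hr0 => gf_eq ht0 ht2 r hr hr0⟩, ?_⟩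
  have hderiv_cont : ContinuousOn (deriv (gf t)) (Set.Icc (-1 : ℝ) 1) := by
    intro x hx
    have h1 : ContinuousAt (fderiv ℝ (gf t)) x := (gf_analytic ht0 ht2 x hx).fderiv.continuousAt
    have h2 : ContinuousAt (fun y => fderiv ℝ (gf t) y 1) x :=
      ((ContinuousLinearMap.apply ℝ ℝ (1 : ℝ)).continuous.continuousAt).comp h1
    exact h2.continuousWithinAt
  obtain ⟨M, hM⟩ :=
    (isCompact_Icc : IsCompact (Set.Icc (-1 : ℝ) 1)).exists_bound_of_continuousOn hderiv_cont
  set K : ℝ := |gf t 1| + |gf t (-1)| + 2 * max M 0 with hKdef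
  have hK0 : 0 ≤ K := by positivity
  refine ⟨2 * (K + 1) / t, by positivity, ?_⟩
  intro ℓ _
  set L : ℝ := (ℓ : ℝ) + 1 with hLdef
  have hL1 : (1 : ℝ) ≤ L := by
    have : (0:ℝ) ≤ (ℓ : ℝ) := Nat.cast_nonneg ℓ
    linarith
  have hL0 : (0 : ℝ) < L := lt_of_lt_of_le one_pos hL1
  set a : ℝ := L * t / 2 with hadef
  have ha0 : (0 : ℝ) < a := by rw [hadef]; positivity
  have hsin1 : ∀ y : ℝ, |Real.sin y| ≤ 1 := fun y =>
    abs_le.2 ⟨Real.neg_one_le_sin y, Real.sin_le_one y⟩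
  -- Step 1: replace integrand
  have hstep1 : ∫ r in Set.Ioo (-1 : ℝ) 1,
      (r / Real.sin (t * r / 2) - 1 / Real.sin (t / 2)) / (t * (1 - r ^ 2))
        * Real.cos (((ℓ : ℝ) + 1) * t * r / 2)
      = ∫ r in Set.Ioo (-1 : ℝ) 1, gf t r * Real.cos (a * r) := by
    apply MeasureTheory.setIntegral_congr_ae measurableSet_Ioo
    have h0 : ∀ᵐ r : ℝ, r ≠ (0 : ℝ) := by
      simp only [ae_iff, not_not]
      rw [Set.setOf_eq_eq_singleton]
      exact measure_singleton 0
    filter_upwards [h0] with r hr0 hr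
    rw [← gf_eq ht0 ht2 r hr hr0]
    congr 1
    congr 1
    rw [hadef, hLdef]; ring
  rw [hstep1]
  have hIoo : ∫ r in Set.Ioo (-1 : ℝ) 1, gf t r * Real.cos (a * r)
      = ∫ r in (-1 : ℝ)..1, gf t r * Real.cos (a * r) := by
    rw [intervalIntegral.integral_of_le (by norm_num : (-1 : ℝ) ≤ 1),
      integral_Ioc_eq_integral_Ioo]
  rw [hIoo]
  have huIcc : Set.uIcc (-1 : ℝ) 1 = Set.Icc (-1 : ℝ) 1 := Set.uIcc_of_le (by norm_num)
  have hu : ∀ x ∈ Set.uIcc (-1 : ℝ) 1, HasDerivAt (gf t) (deriv (gf t) x) x := by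
    intro x hx; rw [huIcc] at hx
    exact ((gf_analytic ht0 ht2 x hx).differentiableAt).hasDerivAt
  have hv : ∀ x ∈ Set.uIcc (-1 : ℝ) 1,
      HasDerivAt (fun r => Real.sin (a * r) / a) (Real.cos (a * x)) x := by
    intro x _
    have h := (((hasDerivAt_id x).const_mul a).sin).div_const a
    refine h.congr_deriv ?_
    simp [ha0.ne']
  have hu' : IntervalIntegrable (deriv (gf t)) volume (-1) 1 :=
    (huIcc ▸ hderiv_cont).intervalIntegrable
  have hv' : IntervalIntegrable (fun r => Real.cos (a * r)) volume (-1) 1 :=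
    (Real.continuous_cos.comp (continuous_const.mul continuous_id)).intervalIntegrable _ _
  have hibp := intervalIntegral.integral_mul_deriv_eq_deriv_mul hu hv hu' hv'
  rw [hibp]
  have hT3 : |∫ x in (-1 : ℝ)..1, deriv (gf t) x * (Real.sin (a * x) / a)|
      ≤ max M 0 / a * 2 := by
    have hb : ∀ x ∈ Set.uIoc (-1 : ℝ) 1,
        ‖deriv (gf t) x * (Real.sin (a * x) / a)‖ ≤ max M 0 / a := by
      intro x hx
      have hx' : x ∈ Set.Icc (-1 : ℝ) 1 := by
        rw [Set.uIoc_of_le (by norm_num : (-1:ℝ) ≤ 1)] at hx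
        exact Set.Ioc_subset_Icc_self hx
      rw [Real.norm_eq_abs, abs_mul, abs_div, abs_of_pos ha0]
      calc |deriv (gf t) x| * (|Real.sin (a * x)| / a)
          ≤ max M 0 * (1 / a) := by
            gcongr
            · exact le_trans (by simpa [Real.norm_eq_abs] using hM x hx') (le_max_left _ _)
            · exact hsin1 _
        _ = max M 0 / a := by ring
    have := intervalIntegral.norm_integral_le_of_norm_le_const hb
    rw [Real.norm_eq_abs] at this
    convert this using 2
    norm_num
  have hT1 : |gf t 1 * (Real.sin (a * 1) / a)| ≤ |gf t 1| / a := by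
    rw [abs_mul, abs_div, abs_of_pos ha0]
    calc |gf t 1| * (|Real.sin (a * 1)| / a) ≤ |gf t 1| * (1 / a) := by
          gcongr; exact hsin1 _
      _ = |gf t 1| / a := by ring
  have hT2 : |gf t (-1) * (Real.sin (a * -1) / a)| ≤ |gf t (-1)| / a := by
    rw [abs_mul, abs_div, abs_of_pos ha0]
    calc |gf t (-1)| * (|Real.sin (a * -1)| / a) ≤ |gf t (-1)| * (1 / a) := by
          gcongr; exact hsin1 _
      _ = |gf t (-1)| / a := by ring
  have habs : |gf t 1 * (Real.sin (a * 1) / a) - gf t (-1) * (Real.sin (a * -1) / a)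
      - ∫ x in (-1 : ℝ)..1, deriv (gf t) x * (Real.sin (a * x) / a)|
      ≤ K / a := by
    calc |gf t 1 * (Real.sin (a * 1) / a) - gf t (-1) * (Real.sin (a * -1) / a)
        - ∫ x in (-1 : ℝ)..1, deriv (gf t) x * (Real.sin (a * x) / a)|
        ≤ |gf t 1 * (Real.sin (a * 1) / a) - gf t (-1) * (Real.sin (a * -1) / a)|
          + |∫ x in (-1 : ℝ)..1, deriv (gf t) x * (Real.sin (a * x) / a)| := abs_sub _ _
      _ ≤ |gf t 1 * (Real.sin (a * 1) / a)| + |gf t (-1) * (Real.sin (a * -1) / a)|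
          + |∫ x in (-1 : ℝ)..1, deriv (gf t) x * (Real.sin (a * x) / a)| := by
            have := abs_sub (gf t 1 * (Real.sin (a * 1) / a))
              (gf t (-1) * (Real.sin (a * -1) / a))
            linarith
      _ ≤ |gf t 1| / a + |gf t (-1)| / a + max M 0 / a * 2 := by linarith
      _ = K / a := by rw [hKdef]; field_simp
  refine le_trans habs ?_
  have hKa : K / a = 2 * K / (t * L) := by
    rw [hadef]; field_simp
  rw [hKa, div_div]
  have htL : (0:ℝ) < t * L := by positivity
  gcongr
  linarith
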